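/- The set of normal subgroups N of F_n such that F_n/N is a simple group is a G_delta (Pi^0_2) subset of the space G_n of normal subgroups of F_n. -/

import Mathlib

open scoped Classical

instance freeGroupCountable (n : ℕ) : Countable (FreeGroup (Fin n)) :=
  FreeGroup.toWord_injective.countable

/-- The space of marked `n`-generated groups: normal subgroups of the free group. -/
def MarkedGroups (n : ℕ) : Type := {N : Subgroup (FreeGroup (Fin n)) // N.Normal}

/-- The Chabauty topology, induced from the Cantor space `{0,1}^{F_n}`. -/
noncomputable instance (n : ℕ) : TopologicalSpace (MarkedGroups n) :=
  TopologicalSpace.induced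
    (fun (N : MarkedGroups n) (g : FreeGroup (Fin n)) => decide (g ∈ N.1))
    inferInstance

lemma mem_clopen (n : ℕ) (g : FreeGroup (Fin n)) :
    IsClopen {N : MarkedGroups n | g ∈ N.1} := by
  have h1 : Continuous (fun (N : MarkedGroups n) (g : FreeGroup (Fin n)) =>
      decide (g ∈ N.1)) := continuous_induced_dom
  have hc : Continuous (fun N : MarkedGroups n => decide (g ∈ N.1)) :=
    (continuous_apply g).comp h1
  have : {N : MarkedGroups n | g ∈ N.1}
      = (fun N : MarkedGroups n => decide (g ∈ N.1)) ⁻¹' {true} := by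
    ext N; simp
  rw [this]
  exact (isClopen_discrete _).preimage hc

/-- Simplicity of the quotient, characterized by countably many conditions. -/
lemma simple_iff (n : ℕ) (N : MarkedGroups n) :
    (letI := N.2; IsSimpleGroup (FreeGroup (Fin n) ⧸ N.1)) ↔
      (∃ g, g ∉ N.1) ∧ ∀ g d : FreeGroup (Fin n),
        g ∈ N.1 ∨ ∃ h ∈ Subgroup.normalClosure {g}, h⁻¹ * d ∈ N.1 := by
  letI := N.2
  set F := FreeGroup (Fin n)
  have key : ∀ g : F, ((∀ d : F, ∃ h ∈ Subgroup.normalClosure {g}, h⁻¹ * d ∈ N.1) ↔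
      Subgroup.normalClosure {((g : F) : F ⧸ N.1)} = ⊤) := by
    intro g
    have hs : Function.Surjective (QuotientGroup.mk' N.1) := QuotientGroup.mk'_surjective N.1
    have hmap := Subgroup.map_normalClosure {g} (QuotientGroup.mk' N.1) hs
    rw [Set.image_singleton, QuotientGroup.mk'_apply] at hmap
    constructor
    · intro H
      rw [← hmap, Subgroup.eq_top_iff']
      intro q
      obtain ⟨d, rfl⟩ := hs q
      obtain ⟨h, hh, hmem⟩ := H d
      exact ⟨h, hh, by rw [QuotientGroup.mk'_apply, QuotientGroup.mk'_apply,
        QuotientGroup.eq]; exact hmem⟩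
    · intro H d
      have : ((d : F) : F ⧸ N.1) ∈ Subgroup.map (QuotientGroup.mk' N.1)
          (Subgroup.normalClosure {g}) := by rw [hmap, H]; trivial
      obtain ⟨h, hh, heq⟩ := this
      refine ⟨h, hh, ?_⟩
      rw [QuotientGroup.mk'_apply] at heq
      exact (QuotientGroup.eq).mp heq
  constructor
  · intro hsimple
    constructor
    · by_contra hcon
      push_neg at hcon
      have htop : N.1 = ⊤ := Subgroup.eq_top_iff' N.1 |>.mpr hcon
      have hnt : Nontrivial (F ⧸ N.1) := hsimple.1
      have hsub : Subsingleton (F ⧸ N.1) := by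
        rw [htop]; exact QuotientGroup.subsingleton_quotient_top
      exact not_nontrivial_iff_subsingleton.mpr hsub hnt
    · intro g d
      by_cases hg : g ∈ N.1
      · exact Or.inl hg
      · refine Or.inr ?_
        have hne : ((g : F) : F ⧸ N.1) ≠ 1 := by
          simpa [QuotientGroup.eq_one_iff] using hg
        have htop : Subgroup.normalClosure {((g : F) : F ⧸ N.1)} = ⊤ := by
          rcases IsSimpleGroup.eq_bot_or_eq_top_of_normal
              (Subgroup.normalClosure {((g : F) : F ⧸ N.1)})
              (Subgroup.normalClosure_normal) with h | h
          · exact absurd (h ▸ Subgroup.subset_normalClosure (s := {((g : F) : F ⧸ N.1)})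
              rfl) (by simpa using hne)
          · exact h
        exact (key g).mpr htop d
  · rintro ⟨⟨g0, hg0⟩, H⟩
    have hnt : Nontrivial (F ⧸ N.1) := by
      refine ⟨⟨((g0 : F) : F ⧸ N.1), 1, ?_⟩⟩
      simpa [QuotientGroup.eq_one_iff] using hg0
    refine ⟨fun K hK => ?_⟩
    by_cases hbot : K = ⊥
    · exact Or.inl hbot
    · refine Or.inr ?_
      obtain ⟨q, hq, hq1⟩ := (K.bot_or_exists_ne_one).resolve_left hbot
      obtain ⟨g, rfl⟩ := QuotientGroup.mk'_surjective N.1 q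
      have hg : g ∉ N.1 := fun h => hq1 (by
        rw [QuotientGroup.mk'_apply]; exact (QuotientGroup.eq_one_iff g).mpr h)
      have hall : ∀ d : F, ∃ h ∈ Subgroup.normalClosure {g}, h⁻¹ * d ∈ N.1 := by
        intro d
        rcases H g d with h | h
        · exact absurd h hg
        · exact h
      have htop := (key g).mp hall
      have hle : Subgroup.normalClosure {((g : F) : F ⧸ N.1)} ≤ K :=
        Subgroup.normalClosure_le_normal (by simpa using hq)
      exact top_le_iff.mp (htop ▸ hle)

theorem simple_is_Gdelta (n : ℕ) :
    IsGδ {N : MarkedGroups n | letI := N.2;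
      IsSimpleGroup (FreeGroup (Fin n) ⧸ N.1)} := by
  have heq : {N : MarkedGroups n | letI := N.2;
      IsSimpleGroup (FreeGroup (Fin n) ⧸ N.1)} =
      (⋃ g, {N : MarkedGroups n | g ∈ N.1}ᶜ) ∩
      ⋂ (g : FreeGroup (Fin n)) (d : FreeGroup (Fin n)),
        ({N : MarkedGroups n | g ∈ N.1} ∪
          ⋃ h ∈ Subgroup.normalClosure ({g} : Set (FreeGroup (Fin n))),
            {N : MarkedGroups n | h⁻¹ * d ∈ N.1}) := by
    ext N
    simp only [Set.mem_setOf_eq, Set.mem_inter_iff, Set.mem_iInter, Set.mem_iUnion,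
      Set.mem_union, Set.mem_compl_iff, exists_prop]
    exact simple_iff n N
  rw [heq]
  refine IsGδ.inter ?_ (IsGδ.iInter fun g => IsGδ.iInter fun d => ?_)
  · exact (isOpen_iUnion fun g => (mem_clopen n g).compl.isOpen).isGδ
  · refine (IsOpen.union (mem_clopen n g).isOpen ?_).isGδ
    exact isOpen_biUnion fun h _ => (mem_clopen n (h⁻¹ * d)).isOpen
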